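/- The N.6 bracket table satisfies the Jacobi identity, and the resulting 6-dimensional complex Lie algebra is isomorphic to the semidirect product sl(2,ℂ) ⋉ heis₃, namely the 6-dimensional complex Lie algebra with basis H, X, Y, S, T, U and nonzero brackets [H,X]=2X, [H,Y]=-2Y, [X,Y]=H, [H,S]=S, [H,T]=-T, [X,T]=S, [Y,S]=T, [S,T]=U (U central). -/

import Mathlib

set_option maxHeartbeats 1000000

noncomputable def n6c : Fin 6 → Fin 6 → Fin 6 → ℂ :=
  ![![![0, 0, 0, 0, 0, 0],
     ![0, 0, 1, 0, 0, 0],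
     ![(-2), 0, 0, 0, 0, 0],
     ![0, 0, 0, 0, 0, 0],
     ![1, 0, 0, 0, 0, (-1)],
     ![0, 0, 0, 0, 0, 0]],
   ![![0, 0, (-1), 0, 0, 0],
     ![0, 0, 0, 0, 0, 0],
     ![(-18), 2, 0, (-2), 0, 0],
     ![0, 0, (-12), 0, 3, 0],
     ![(-42), (-2), 0, 6, 0, 0],
     ![0, 0, 0, 0, (-1), 0]],
   ![![2, 0, 0, 0, 0, 0],
     ![18, (-2), 0, 2, 0, 0],
     ![0, 0, 0, 0, 0, 0],
     ![27, 0, 0, 0, 0, (-3)],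
     ![0, 0, (-1), 0, (-1), 0],
     ![(-1), 0, 0, 0, 0, 1]],
   ![![0, 0, 0, 0, 0, 0],
     ![0, 0, 12, 0, (-3), 0],
     ![(-27), 0, 0, 0, 0, 3],
     ![0, 0, 0, 0, 0, 0],
     ![(-60), 0, 0, 6, 0, 0],
     ![0, 0, 0, 0, 0, 0]],
   ![![(-1), 0, 0, 0, 0, 1],
     ![42, 2, 0, (-6), 0, 0],
     ![0, 0, 1, 0, 1, 0],
     ![60, 0, 0, (-6), 0, 0],
     ![0, 0, 0, 0, 0, 0],
     ![(-24), 0, 0, 2, 0, 4]],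
   ![![0, 0, 0, 0, 0, 0],
     ![0, 0, 0, 0, 1, 0],
     ![1, 0, 0, 0, 0, (-1)],
     ![0, 0, 0, 0, 0, 0],
     ![24, 0, 0, (-2), 0, (-4)],
     ![0, 0, 0, 0, 0, 0]]]

noncomputable def n6br (x y : Fin 6 → ℂ) : Fin 6 → ℂ :=
  fun k => ∑ i : Fin 6, ∑ j : Fin 6, x i * y j * n6c i j k


theorem cons_val_five' {α : Type*} {m : ℕ} (x : α) (u : Fin (m+5) → α) :
    Matrix.vecCons x u 5 =
      Matrix.vecHead (Matrix.vecTail (Matrix.vecTail (Matrix.vecTail (Matrix.vecTail u)))) :=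
  rfl

theorem n6br_eval0 (x y : Fin 6 → ℂ) : n6br x y 0 = (-2) * (x 0 * y 2) + x 0 * y 4 + (-18) * (x 1 * y 2) + (-42) * (x 1 * y 4) + (2) * (x 2 * y 0) + (18) * (x 2 * y 1) + (27) * (x 2 * y 3) + -(x 2 * y 5) + (-27) * (x 3 * y 2) + (-60) * (x 3 * y 4) + -(x 4 * y 0) + (42) * (x 4 * y 1) + (60) * (x 4 * y 3) + (-24) * (x 4 * y 5) + x 5 * y 2 + (24) * (x 5 * y 4) := by
  simp only [n6br, n6c, Fin.sum_univ_six, Matrix.cons_val_zero, Matrix.cons_val_one, Matrix.head_cons, Matrix.cons_val_two, Matrix.tail_cons, Matrix.cons_val_three, Matrix.cons_val_four, cons_val_five']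
  ring

theorem n6br_eval1 (x y : Fin 6 → ℂ) : n6br x y 1 = (2) * (x 1 * y 2) + (-2) * (x 1 * y 4) + (-2) * (x 2 * y 1) + (2) * (x 4 * y 1) := by
  simp only [n6br, n6c, Fin.sum_univ_six, Matrix.cons_val_zero, Matrix.cons_val_one, Matrix.head_cons, Matrix.cons_val_two, Matrix.tail_cons, Matrix.cons_val_three, Matrix.cons_val_four, cons_val_five']
  ring

theorem n6br_eval2 (x y : Fin 6 → ℂ) : n6br x y 2 = x 0 * y 1 + -(x 1 * y 0) + (-12) * (x 1 * y 3) + -(x 2 * y 4) + (12) * (x 3 * y 1) + x 4 * y 2 := by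
  simp only [n6br, n6c, Fin.sum_univ_six, Matrix.cons_val_zero, Matrix.cons_val_one, Matrix.head_cons, Matrix.cons_val_two, Matrix.tail_cons, Matrix.cons_val_three, Matrix.cons_val_four, cons_val_five']
  ring

theorem n6br_eval3 (x y : Fin 6 → ℂ) : n6br x y 3 = (-2) * (x 1 * y 2) + (6) * (x 1 * y 4) + (2) * (x 2 * y 1) + (6) * (x 3 * y 4) + (-6) * (x 4 * y 1) + (-6) * (x 4 * y 3) + (2) * (x 4 * y 5) + (-2) * (x 5 * y 4) := by
  simp only [n6br, n6c, Fin.sum_univ_six, Matrix.cons_val_zero, Matrix.cons_val_one, Matrix.head_cons, Matrix.cons_val_two, Matrix.tail_cons, Matrix.cons_val_three, Matrix.cons_val_four, cons_val_five']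
  ring

theorem n6br_eval4 (x y : Fin 6 → ℂ) : n6br x y 4 = (3) * (x 1 * y 3) + -(x 1 * y 5) + -(x 2 * y 4) + (-3) * (x 3 * y 1) + x 4 * y 2 + x 5 * y 1 := by
  simp only [n6br, n6c, Fin.sum_univ_six, Matrix.cons_val_zero, Matrix.cons_val_one, Matrix.head_cons, Matrix.cons_val_two, Matrix.tail_cons, Matrix.cons_val_three, Matrix.cons_val_four, cons_val_five']
  ring

theorem n6br_eval5 (x y : Fin 6 → ℂ) : n6br x y 5 = -(x 0 * y 4) + (-3) * (x 2 * y 3) + x 2 * y 5 + (3) * (x 3 * y 2) + x 4 * y 0 + (4) * (x 4 * y 5) + -(x 5 * y 2) + (-4) * (x 5 * y 4) := by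
  simp only [n6br, n6c, Fin.sum_univ_six, Matrix.cons_val_zero, Matrix.cons_val_one, Matrix.head_cons, Matrix.cons_val_two, Matrix.tail_cons, Matrix.cons_val_three, Matrix.cons_val_four, cons_val_five']
  ring


theorem n6_jac0 (x y z : Fin 6 → ℂ) :
    n6br x (n6br y z) 0 + n6br y (n6br z x) 0 + n6br z (n6br x y) 0 = 0 := by
  simp only [n6br_eval0, n6br_eval1, n6br_eval2, n6br_eval3, n6br_eval4, n6br_eval5]; ring

theorem n6_jac1 (x y z : Fin 6 → ℂ) :
    n6br x (n6br y z) 1 + n6br y (n6br z x) 1 + n6br z (n6br x y) 1 = 0 := by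
  simp only [n6br_eval0, n6br_eval1, n6br_eval2, n6br_eval3, n6br_eval4, n6br_eval5]; ring

theorem n6_jac2 (x y z : Fin 6 → ℂ) :
    n6br x (n6br y z) 2 + n6br y (n6br z x) 2 + n6br z (n6br x y) 2 = 0 := by
  simp only [n6br_eval0, n6br_eval1, n6br_eval2, n6br_eval3, n6br_eval4, n6br_eval5]; ring

theorem n6_jac3 (x y z : Fin 6 → ℂ) :
    n6br x (n6br y z) 3 + n6br y (n6br z x) 3 + n6br z (n6br x y) 3 = 0 := by
  simp only [n6br_eval0, n6br_eval1, n6br_eval2, n6br_eval3, n6br_eval4, n6br_eval5]; ring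

theorem n6_jac4 (x y z : Fin 6 → ℂ) :
    n6br x (n6br y z) 4 + n6br y (n6br z x) 4 + n6br z (n6br x y) 4 = 0 := by
  simp only [n6br_eval0, n6br_eval1, n6br_eval2, n6br_eval3, n6br_eval4, n6br_eval5]; ring

theorem n6_jac5 (x y z : Fin 6 → ℂ) :
    n6br x (n6br y z) 5 + n6br y (n6br z x) 5 + n6br z (n6br x y) 5 = 0 := by
  simp only [n6br_eval0, n6br_eval1, n6br_eval2, n6br_eval3, n6br_eval4, n6br_eval5]; ring

theorem n6_jacobi (x y z : Fin 6 → ℂ) :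
    n6br x (n6br y z) + n6br y (n6br z x) + n6br z (n6br x y) = 0 := by
  funext k
  fin_cases k
  exacts [n6_jac0 x y z, n6_jac1 x y z, n6_jac2 x y z, n6_jac3 x y z, n6_jac4 x y z, n6_jac5 x y z]


theorem n6_aux_equiv {F : Type*} [LieRing F] [LieAlgebra ℂ F]
    {G : Type*} [LieRing G] [LieAlgebra ℂ G]
    (bF : Module.Basis (Fin 6) ℂ F) (bG : Module.Basis (Fin 6) ℂ G) (f : F →ₗ[ℂ] G) (g : G →ₗ[ℂ] F)
    (hfg : ∀ i, f (g (bG i)) = bG i) (hgf : ∀ i, g (f (bF i)) = bF i)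
    (hlie : ∀ i j, f ⁅bF i, bF j⁆ = ⁅f (bF i), f (bF j)⁆) : Nonempty (F ≃ₗ⁅ℂ⁆ G) := by
  have h1 : f.comp g = LinearMap.id := bG.ext fun i => by simpa using hfg i
  have h2 : g.comp f = LinearMap.id := bF.ext fun i => by simpa using hgf i
  have hB : (LinearMap.mk₂ ℂ (fun x y : F => f ⁅x, y⁆)
        (fun m n p => by simp only [add_lie, map_add]) (fun c m n => by simp only [smul_lie, map_smul])
        (fun m n p => by simp only [lie_add, map_add]) (fun c m n => by simp only [lie_smul, map_smul]))
      = (LinearMap.mk₂ ℂ (fun x y : F => ⁅f x, f y⁆)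
        (fun m n p => by simp only [map_add, add_lie]) (fun c m n => by simp only [map_smul, smul_lie])
        (fun m n p => by simp only [map_add, lie_add]) (fun c m n => by simp only [map_smul, lie_smul])) :=
    LinearMap.ext_basis bF bF fun i j => by simpa using hlie i j
  have hmap : ∀ x y : F, f ⁅x, y⁆ = ⁅f x, f y⁆ := fun x y => by
    simpa using LinearMap.congr_fun (LinearMap.congr_fun hB x) y
  exact ⟨{ toLinearMap := f, map_lie' := fun {x y} => hmap x y, invFun := g,
           left_inv := fun x => LinearMap.congr_fun h2 x,
           right_inv := fun x => LinearMap.congr_fun h1 x }⟩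

theorem N6_table_is_sl2_semidirect_heis3
    {F : Type*} [LieRing F] [LieAlgebra ℂ F]
    (N X1 X2 X3 X4 X5 : F)
    (hbindep : LinearIndependent ℂ ![N, X1, X2, X3, X4, X5])
    (hbspan : Submodule.span ℂ (Set.range ![N, X1, X2, X3, X4, X5]) = ⊤)
    (hb01 : ⁅N, X1⁆ = X2)
    (hb02 : ⁅N, X2⁆ = (-2 : ℂ) • N)
    (hb03 : ⁅N, X3⁆ = 0)
    (hb04 : ⁅N, X4⁆ = N + -X5)
    (hb05 : ⁅N, X5⁆ = 0)
    (hb12 : ⁅X1, X2⁆ = (-18 : ℂ) • N + (2 : ℂ) • X1 + (-2 : ℂ) • X3)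
    (hb13 : ⁅X1, X3⁆ = (-12 : ℂ) • X2 + (3 : ℂ) • X4)
    (hb14 : ⁅X1, X4⁆ = (-42 : ℂ) • N + (-2 : ℂ) • X1 + (6 : ℂ) • X3)
    (hb15 : ⁅X1, X5⁆ = -X4)
    (hb23 : ⁅X2, X3⁆ = (27 : ℂ) • N + (-3 : ℂ) • X5)
    (hb24 : ⁅X2, X4⁆ = -X2 + -X4)
    (hb25 : ⁅X2, X5⁆ = -N + X5)
    (hb34 : ⁅X3, X4⁆ = (-60 : ℂ) • N + (6 : ℂ) • X3)
    (hb35 : ⁅X3, X5⁆ = 0)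
    (hb45 : ⁅X4, X5⁆ = (-24 : ℂ) • N + (2 : ℂ) • X3 + (4 : ℂ) • X5)
    {G : Type*} [LieRing G] [LieAlgebra ℂ G]
    (H X Y S T U : G)
    (hgindep : LinearIndependent ℂ ![H, X, Y, S, T, U])
    (hgspan : Submodule.span ℂ (Set.range ![H, X, Y, S, T, U]) = ⊤)
    (hg01 : ⁅H, X⁆ = (2 : ℂ) • X)
    (hg02 : ⁅H, Y⁆ = (-2 : ℂ) • Y)
    (hg03 : ⁅H, S⁆ = S)
    (hg04 : ⁅H, T⁆ = -T)
    (hg05 : ⁅H, U⁆ = 0)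
    (hg12 : ⁅X, Y⁆ = H)
    (hg13 : ⁅X, S⁆ = 0)
    (hg14 : ⁅X, T⁆ = S)
    (hg15 : ⁅X, U⁆ = 0)
    (hg23 : ⁅Y, S⁆ = T)
    (hg24 : ⁅Y, T⁆ = 0)
    (hg25 : ⁅Y, U⁆ = 0)
    (hg34 : ⁅S, T⁆ = U)
    (hg35 : ⁅S, U⁆ = 0)
    (hg45 : ⁅T, U⁆ = 0) :
    (∀ x y z : Fin 6 → ℂ,
      n6br x (n6br y z) + n6br y (n6br z x) + n6br z (n6br x y) = 0) ∧
    Nonempty (F ≃ₗ⁅ℂ⁆ G) := by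
  refine ⟨fun x y z => n6_jacobi x y z, ?_⟩
  have hsF : ⊤ ≤ Submodule.span ℂ (Set.range ![N, X1, X2, X3, X4, X5]) := hbspan.ge
  have hsG : ⊤ ≤ Submodule.span ℂ (Set.range ![H, X, Y, S, T, U]) := hgspan.ge
  let bF : Module.Basis (Fin 6) ℂ F := Module.Basis.mk hbindep hsF
  let bG : Module.Basis (Fin 6) ℂ G := Module.Basis.mk hgindep hsG
  have hbF0 : bF 0 = N := Module.Basis.mk_apply hbindep hsF 0
  have hbF1 : bF 1 = X1 := Module.Basis.mk_apply hbindep hsF 1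
  have hbF2 : bF 2 = X2 := Module.Basis.mk_apply hbindep hsF 2
  have hbF3 : bF 3 = X3 := Module.Basis.mk_apply hbindep hsF 3
  have hbF4 : bF 4 = X4 := Module.Basis.mk_apply hbindep hsF 4
  have hbF5 : bF 5 = X5 := Module.Basis.mk_apply hbindep hsF 5
  have hbG0 : bG 0 = H := Module.Basis.mk_apply hgindep hsG 0
  have hbG1 : bG 1 = X := Module.Basis.mk_apply hgindep hsG 1
  have hbG2 : bG 2 = Y := Module.Basis.mk_apply hgindep hsG 2
  have hbG3 : bG 3 = S := Module.Basis.mk_apply hgindep hsG 3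
  have hbG4 : bG 4 = T := Module.Basis.mk_apply hgindep hsG 4
  have hbG5 : bG 5 = U := Module.Basis.mk_apply hgindep hsG 5
  let f : F →ₗ[ℂ] G := bF.constr ℂ ![X, (12 : ℂ) • X + Y + (2 : ℂ) • S + ((1 : ℂ)/2) • U, H, (15 : ℂ) • X + (3 : ℂ) • S + ((1 : ℂ)/2) • U, -H + T, -X - S]
  let g : G →ₗ[ℂ] F := bG.constr ℂ ![X2, N, (2 : ℂ) • N + X1 - X3 - X5, -N - X5, X2 + X4, (-24 : ℂ) • N + (2 : ℂ) • X3 + (6 : ℂ) • X5]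
  have hf0 : f N = X := by rw [← hbF0]; exact bF.constr_basis ℂ _ 0
  have hf1 : f X1 = (12 : ℂ) • X + Y + (2 : ℂ) • S + ((1 : ℂ)/2) • U := by rw [← hbF1]; exact bF.constr_basis ℂ _ 1
  have hf2 : f X2 = H := by rw [← hbF2]; exact bF.constr_basis ℂ _ 2
  have hf3 : f X3 = (15 : ℂ) • X + (3 : ℂ) • S + ((1 : ℂ)/2) • U := by rw [← hbF3]; exact bF.constr_basis ℂ _ 3
  have hf4 : f X4 = -H + T := by rw [← hbF4]; exact bF.constr_basis ℂ _ 4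
  have hf5 : f X5 = -X - S := by rw [← hbF5]; exact bF.constr_basis ℂ _ 5
  have hgv0 : g H = X2 := by rw [← hbG0]; exact bG.constr_basis ℂ _ 0
  have hgv1 : g X = N := by rw [← hbG1]; exact bG.constr_basis ℂ _ 1
  have hgv2 : g Y = (2 : ℂ) • N + X1 - X3 - X5 := by rw [← hbG2]; exact bG.constr_basis ℂ _ 2
  have hgv3 : g S = -N - X5 := by rw [← hbG3]; exact bG.constr_basis ℂ _ 3
  have hgv4 : g T = X2 + X4 := by rw [← hbG4]; exact bG.constr_basis ℂ _ 4
  have hgv5 : g U = (-24 : ℂ) • N + (2 : ℂ) • X3 + (6 : ℂ) • X5 := by rw [← hbG5]; exact bG.constr_basis ℂ _ 5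
  have hr10 : ⁅X, H⁆ = -((2 : ℂ) • X) := by rw [← lie_skew, hg01]
  have hr20 : ⁅Y, H⁆ = -((-2 : ℂ) • Y) := by rw [← lie_skew, hg02]
  have hr30 : ⁅S, H⁆ = -(S) := by rw [← lie_skew, hg03]
  have hr40 : ⁅T, H⁆ = -(-T) := by rw [← lie_skew, hg04]
  have hr50 : ⁅U, H⁆ = -((0 : G)) := by rw [← lie_skew, hg05]
  have hr21 : ⁅Y, X⁆ = -(H) := by rw [← lie_skew, hg12]
  have hr31 : ⁅S, X⁆ = -((0 : G)) := by rw [← lie_skew, hg13]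
  have hr41 : ⁅T, X⁆ = -(S) := by rw [← lie_skew, hg14]
  have hr51 : ⁅U, X⁆ = -((0 : G)) := by rw [← lie_skew, hg15]
  have hr32 : ⁅S, Y⁆ = -(T) := by rw [← lie_skew, hg23]
  have hr42 : ⁅T, Y⁆ = -((0 : G)) := by rw [← lie_skew, hg24]
  have hr52 : ⁅U, Y⁆ = -((0 : G)) := by rw [← lie_skew, hg25]
  have hr43 : ⁅T, S⁆ = -(U) := by rw [← lie_skew, hg34]
  have hr53 : ⁅U, S⁆ = -((0 : G)) := by rw [← lie_skew, hg35]
  have hr54 : ⁅U, T⁆ = -((0 : G)) := by rw [← lie_skew, hg45]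
  have p0 : f (g H) = H := by
    rw [hgv0]; simp only [map_add, map_sub, map_neg, map_smul, map_zero, hf0, hf1, hf2, hf3, hf4, hf5]; try module
  have p1 : f (g X) = X := by
    rw [hgv1]; simp only [map_add, map_sub, map_neg, map_smul, map_zero, hf0, hf1, hf2, hf3, hf4, hf5]; try module
  have p2 : f (g Y) = Y := by
    rw [hgv2]; simp only [map_add, map_sub, map_neg, map_smul, map_zero, hf0, hf1, hf2, hf3, hf4, hf5]; try module
  have p3 : f (g S) = S := by
    rw [hgv3]; simp only [map_add, map_sub, map_neg, map_smul, map_zero, hf0, hf1, hf2, hf3, hf4, hf5]; try module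
  have p4 : f (g T) = T := by
    rw [hgv4]; simp only [map_add, map_sub, map_neg, map_smul, map_zero, hf0, hf1, hf2, hf3, hf4, hf5]; try module
  have p5 : f (g U) = U := by
    rw [hgv5]; simp only [map_add, map_sub, map_neg, map_smul, map_zero, hf0, hf1, hf2, hf3, hf4, hf5]; try module
  have q0 : g (f N) = N := by
    rw [hf0]; simp only [map_add, map_sub, map_neg, map_smul, map_zero, hgv0, hgv1, hgv2, hgv3, hgv4, hgv5]; try module
  have q1 : g (f X1) = X1 := by
    rw [hf1]; simp only [map_add, map_sub, map_neg, map_smul, map_zero, hgv0, hgv1, hgv2, hgv3, hgv4, hgv5]; try module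
  have q2 : g (f X2) = X2 := by
    rw [hf2]; simp only [map_add, map_sub, map_neg, map_smul, map_zero, hgv0, hgv1, hgv2, hgv3, hgv4, hgv5]; try module
  have q3 : g (f X3) = X3 := by
    rw [hf3]; simp only [map_add, map_sub, map_neg, map_smul, map_zero, hgv0, hgv1, hgv2, hgv3, hgv4, hgv5]; try module
  have q4 : g (f X4) = X4 := by
    rw [hf4]; simp only [map_add, map_sub, map_neg, map_smul, map_zero, hgv0, hgv1, hgv2, hgv3, hgv4, hgv5]; try module
  have q5 : g (f X5) = X5 := by
    rw [hf5]; simp only [map_add, map_sub, map_neg, map_smul, map_zero, hgv0, hgv1, hgv2, hgv3, hgv4, hgv5]; try module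
  have k01 : f ⁅N, X1⁆ = ⁅f N, f X1⁆ := by
    rw [hb01]
    simp only [map_add, map_sub, map_neg, map_smul, map_zero, hf0, hf1, hf2, hf3, hf4, hf5]
    simp only [lie_add, add_lie, lie_sub, sub_lie, lie_neg, neg_lie, lie_smul, smul_lie, lie_self, lie_zero, zero_lie, smul_zero, smul_neg, neg_zero, neg_neg, smul_smul, hg01, hg02, hg03, hg04, hg05, hg12, hg13, hg14, hg15, hg23, hg24, hg25, hg34, hg35, hg45, hr10, hr20, hr30, hr40, hr50, hr21, hr31, hr41, hr51, hr32, hr42, hr52, hr43, hr53, hr54]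
    try module
  have k02 : f ⁅N, X2⁆ = ⁅f N, f X2⁆ := by
    rw [hb02]
    simp only [map_add, map_sub, map_neg, map_smul, map_zero, hf0, hf1, hf2, hf3, hf4, hf5]
    simp only [lie_add, add_lie, lie_sub, sub_lie, lie_neg, neg_lie, lie_smul, smul_lie, lie_self, lie_zero, zero_lie, smul_zero, smul_neg, neg_zero, neg_neg, smul_smul, hg01, hg02, hg03, hg04, hg05, hg12, hg13, hg14, hg15, hg23, hg24, hg25, hg34, hg35, hg45, hr10, hr20, hr30, hr40, hr50, hr21, hr31, hr41, hr51, hr32, hr42, hr52, hr43, hr53, hr54]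
    try module
  have k03 : f ⁅N, X3⁆ = ⁅f N, f X3⁆ := by
    rw [hb03]
    simp only [map_add, map_sub, map_neg, map_smul, map_zero, hf0, hf1, hf2, hf3, hf4, hf5]
    simp only [lie_add, add_lie, lie_sub, sub_lie, lie_neg, neg_lie, lie_smul, smul_lie, lie_self, lie_zero, zero_lie, smul_zero, smul_neg, neg_zero, neg_neg, smul_smul, hg01, hg02, hg03, hg04, hg05, hg12, hg13, hg14, hg15, hg23, hg24, hg25, hg34, hg35, hg45, hr10, hr20, hr30, hr40, hr50, hr21, hr31, hr41, hr51, hr32, hr42, hr52, hr43, hr53, hr54]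
    try module
  have k04 : f ⁅N, X4⁆ = ⁅f N, f X4⁆ := by
    rw [hb04]
    simp only [map_add, map_sub, map_neg, map_smul, map_zero, hf0, hf1, hf2, hf3, hf4, hf5]
    simp only [lie_add, add_lie, lie_sub, sub_lie, lie_neg, neg_lie, lie_smul, smul_lie, lie_self, lie_zero, zero_lie, smul_zero, smul_neg, neg_zero, neg_neg, smul_smul, hg01, hg02, hg03, hg04, hg05, hg12, hg13, hg14, hg15, hg23, hg24, hg25, hg34, hg35, hg45, hr10, hr20, hr30, hr40, hr50, hr21, hr31, hr41, hr51, hr32, hr42, hr52, hr43, hr53, hr54]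
    try module
  have k05 : f ⁅N, X5⁆ = ⁅f N, f X5⁆ := by
    rw [hb05]
    simp only [map_add, map_sub, map_neg, map_smul, map_zero, hf0, hf1, hf2, hf3, hf4, hf5]
    simp only [lie_add, add_lie, lie_sub, sub_lie, lie_neg, neg_lie, lie_smul, smul_lie, lie_self, lie_zero, zero_lie, smul_zero, smul_neg, neg_zero, neg_neg, smul_smul, hg01, hg02, hg03, hg04, hg05, hg12, hg13, hg14, hg15, hg23, hg24, hg25, hg34, hg35, hg45, hr10, hr20, hr30, hr40, hr50, hr21, hr31, hr41, hr51, hr32, hr42, hr52, hr43, hr53, hr54]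
    try module
  have k12 : f ⁅X1, X2⁆ = ⁅f X1, f X2⁆ := by
    rw [hb12]
    simp only [map_add, map_sub, map_neg, map_smul, map_zero, hf0, hf1, hf2, hf3, hf4, hf5]
    simp only [lie_add, add_lie, lie_sub, sub_lie, lie_neg, neg_lie, lie_smul, smul_lie, lie_self, lie_zero, zero_lie, smul_zero, smul_neg, neg_zero, neg_neg, smul_smul, hg01, hg02, hg03, hg04, hg05, hg12, hg13, hg14, hg15, hg23, hg24, hg25, hg34, hg35, hg45, hr10, hr20, hr30, hr40, hr50, hr21, hr31, hr41, hr51, hr32, hr42, hr52, hr43, hr53, hr54]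
    try module
  have k13 : f ⁅X1, X3⁆ = ⁅f X1, f X3⁆ := by
    rw [hb13]
    simp only [map_add, map_sub, map_neg, map_smul, map_zero, hf0, hf1, hf2, hf3, hf4, hf5]
    simp only [lie_add, add_lie, lie_sub, sub_lie, lie_neg, neg_lie, lie_smul, smul_lie, lie_self, lie_zero, zero_lie, smul_zero, smul_neg, neg_zero, neg_neg, smul_smul, hg01, hg02, hg03, hg04, hg05, hg12, hg13, hg14, hg15, hg23, hg24, hg25, hg34, hg35, hg45, hr10, hr20, hr30, hr40, hr50, hr21, hr31, hr41, hr51, hr32, hr42, hr52, hr43, hr53, hr54]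
    try module
  have k14 : f ⁅X1, X4⁆ = ⁅f X1, f X4⁆ := by
    rw [hb14]
    simp only [map_add, map_sub, map_neg, map_smul, map_zero, hf0, hf1, hf2, hf3, hf4, hf5]
    simp only [lie_add, add_lie, lie_sub, sub_lie, lie_neg, neg_lie, lie_smul, smul_lie, lie_self, lie_zero, zero_lie, smul_zero, smul_neg, neg_zero, neg_neg, smul_smul, hg01, hg02, hg03, hg04, hg05, hg12, hg13, hg14, hg15, hg23, hg24, hg25, hg34, hg35, hg45, hr10, hr20, hr30, hr40, hr50, hr21, hr31, hr41, hr51, hr32, hr42, hr52, hr43, hr53, hr54]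
    try module
  have k15 : f ⁅X1, X5⁆ = ⁅f X1, f X5⁆ := by
    rw [hb15]
    simp only [map_add, map_sub, map_neg, map_smul, map_zero, hf0, hf1, hf2, hf3, hf4, hf5]
    simp only [lie_add, add_lie, lie_sub, sub_lie, lie_neg, neg_lie, lie_smul, smul_lie, lie_self, lie_zero, zero_lie, smul_zero, smul_neg, neg_zero, neg_neg, smul_smul, hg01, hg02, hg03, hg04, hg05, hg12, hg13, hg14, hg15, hg23, hg24, hg25, hg34, hg35, hg45, hr10, hr20, hr30, hr40, hr50, hr21, hr31, hr41, hr51, hr32, hr42, hr52, hr43, hr53, hr54]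
    try module
  have k23 : f ⁅X2, X3⁆ = ⁅f X2, f X3⁆ := by
    rw [hb23]
    simp only [map_add, map_sub, map_neg, map_smul, map_zero, hf0, hf1, hf2, hf3, hf4, hf5]
    simp only [lie_add, add_lie, lie_sub, sub_lie, lie_neg, neg_lie, lie_smul, smul_lie, lie_self, lie_zero, zero_lie, smul_zero, smul_neg, neg_zero, neg_neg, smul_smul, hg01, hg02, hg03, hg04, hg05, hg12, hg13, hg14, hg15, hg23, hg24, hg25, hg34, hg35, hg45, hr10, hr20, hr30, hr40, hr50, hr21, hr31, hr41, hr51, hr32, hr42, hr52, hr43, hr53, hr54]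
    try module
  have k24 : f ⁅X2, X4⁆ = ⁅f X2, f X4⁆ := by
    rw [hb24]
    simp only [map_add, map_sub, map_neg, map_smul, map_zero, hf0, hf1, hf2, hf3, hf4, hf5]
    simp only [lie_add, add_lie, lie_sub, sub_lie, lie_neg, neg_lie, lie_smul, smul_lie, lie_self, lie_zero, zero_lie, smul_zero, smul_neg, neg_zero, neg_neg, smul_smul, hg01, hg02, hg03, hg04, hg05, hg12, hg13, hg14, hg15, hg23, hg24, hg25, hg34, hg35, hg45, hr10, hr20, hr30, hr40, hr50, hr21, hr31, hr41, hr51, hr32, hr42, hr52, hr43, hr53, hr54]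
    try module
  have k25 : f ⁅X2, X5⁆ = ⁅f X2, f X5⁆ := by
    rw [hb25]
    simp only [map_add, map_sub, map_neg, map_smul, map_zero, hf0, hf1, hf2, hf3, hf4, hf5]
    simp only [lie_add, add_lie, lie_sub, sub_lie, lie_neg, neg_lie, lie_smul, smul_lie, lie_self, lie_zero, zero_lie, smul_zero, smul_neg, neg_zero, neg_neg, smul_smul, hg01, hg02, hg03, hg04, hg05, hg12, hg13, hg14, hg15, hg23, hg24, hg25, hg34, hg35, hg45, hr10, hr20, hr30, hr40, hr50, hr21, hr31, hr41, hr51, hr32, hr42, hr52, hr43, hr53, hr54]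
    try module
  have k34 : f ⁅X3, X4⁆ = ⁅f X3, f X4⁆ := by
    rw [hb34]
    simp only [map_add, map_sub, map_neg, map_smul, map_zero, hf0, hf1, hf2, hf3, hf4, hf5]
    simp only [lie_add, add_lie, lie_sub, sub_lie, lie_neg, neg_lie, lie_smul, smul_lie, lie_self, lie_zero, zero_lie, smul_zero, smul_neg, neg_zero, neg_neg, smul_smul, hg01, hg02, hg03, hg04, hg05, hg12, hg13, hg14, hg15, hg23, hg24, hg25, hg34, hg35, hg45, hr10, hr20, hr30, hr40, hr50, hr21, hr31, hr41, hr51, hr32, hr42, hr52, hr43, hr53, hr54]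
    try module
  have k35 : f ⁅X3, X5⁆ = ⁅f X3, f X5⁆ := by
    rw [hb35]
    simp only [map_add, map_sub, map_neg, map_smul, map_zero, hf0, hf1, hf2, hf3, hf4, hf5]
    simp only [lie_add, add_lie, lie_sub, sub_lie, lie_neg, neg_lie, lie_smul, smul_lie, lie_self, lie_zero, zero_lie, smul_zero, smul_neg, neg_zero, neg_neg, smul_smul, hg01, hg02, hg03, hg04, hg05, hg12, hg13, hg14, hg15, hg23, hg24, hg25, hg34, hg35, hg45, hr10, hr20, hr30, hr40, hr50, hr21, hr31, hr41, hr51, hr32, hr42, hr52, hr43, hr53, hr54]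
    try module
  have k45 : f ⁅X4, X5⁆ = ⁅f X4, f X5⁆ := by
    rw [hb45]
    simp only [map_add, map_sub, map_neg, map_smul, map_zero, hf0, hf1, hf2, hf3, hf4, hf5]
    simp only [lie_add, add_lie, lie_sub, sub_lie, lie_neg, neg_lie, lie_smul, smul_lie, lie_self, lie_zero, zero_lie, smul_zero, smul_neg, neg_zero, neg_neg, smul_smul, hg01, hg02, hg03, hg04, hg05, hg12, hg13, hg14, hg15, hg23, hg24, hg25, hg34, hg35, hg45, hr10, hr20, hr30, hr40, hr50, hr21, hr31, hr41, hr51, hr32, hr42, hr52, hr43, hr53, hr54]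
    try module
  have kdiag : ∀ a : F, f ⁅a, a⁆ = ⁅f a, f a⁆ := fun a => by
    rw [lie_self, lie_self, map_zero]
  have kswap : ∀ (a b : F), f ⁅a, b⁆ = ⁅f a, f b⁆ → f ⁅b, a⁆ = ⁅f b, f a⁆ := by
    intro a b h; rw [← lie_skew, map_neg, h, lie_skew]
  have hbFa : ∀ i, bF i = ![N, X1, X2, X3, X4, X5] i := fun i => Module.Basis.mk_apply hbindep hsF i
  have hbGa : ∀ i, bG i = ![H, X, Y, S, T, U] i := fun i => Module.Basis.mk_apply hgindep hsG i
  refine n6_aux_equiv bF bG f g ?_ ?_ ?_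
  · intro i; rw [hbGa i]; fin_cases i
    exacts [p0, p1, p2, p3, p4, p5]
  · intro i; rw [hbFa i]; fin_cases i
    exacts [q0, q1, q2, q3, q4, q5]
  · intro i j
    rw [hbFa i, hbFa j]
    fin_cases i <;> fin_cases j
    exacts [kdiag N, k01, k02, k03, k04, k05, kswap N X1 k01, kdiag X1, k12, k13, k14, k15, kswap N X2 k02, kswap X1 X2 k12, kdiag X2, k23, k24, k25, kswap N X3 k03, kswap X1 X3 k13, kswap X2 X3 k23, kdiag X3, k34, k35, kswap N X4 k04, kswap X1 X4 k14, kswap X2 X4 k24, kswap X3 X4 k34, kdiag X4, k45, kswap N X5 k05, kswap X1 X5 k15, kswap X2 X5 k25, kswap X3 X5 k35, kswap X4 X5 k45, kdiag X5]
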